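/- Let q be a prime power and n a positive integer with gcd(n,q)=1. Then the number of SCRIM factors of x^n − 1 over F_{q^2} is |Ω_{q^2,n}| = Σ_{d | n} λ(q,d) · φ(d)/ord_d(q^2), where λ(q,d) = 1 if d divides q^e + 1 for some odd positive integer e and λ(q,d) = 0 otherwise, and φ is Euler's totient function. -/

import Mathlib

open Polynomial

/-- The reciprocal polynomial `f*(x) = x^(deg f) * f(0)⁻¹ * f(1/x)`. -/
noncomputable def crecip {F : Type*} [Field F] (f : F[X]) : F[X] :=
  C (f.coeff 0)⁻¹ * f.reverse

/-- The conjugate-reciprocal polynomial `f†`, obtained by applying the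
conjugation `a ↦ a ^ q` to each coefficient of `f*`. -/
noncomputable def cdagger {F : Type*} [Field F] (q : ℕ) (f : F[X]) : F[X] :=
  (crecip f).sum fun i a => C (a ^ q) * X ^ i

/-- A polynomial is SCRIM if it is monic, irreducible, and self-conjugate-reciprocal. -/
def IsSCRIM {F : Type*} [Field F] (q : ℕ) (f : F[X]) : Prop :=
  f.Monic ∧ Irreducible f ∧ f = cdagger q f

/-- The set `Ω_{q²,n}` of SCRIM factors of `x^n - 1` over `F = F_{q²}`. -/
def scrimFactors (F : Type*) [Field F] (q n : ℕ) : Set F[X] :=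
  {f | IsSCRIM q f ∧ f ∣ X ^ n - 1}

set_option linter.unusedSectionVars false

theorem powiff {K : Type*} [Field K] {x : K} (hx0 : x ≠ 0) (a b : ℕ) :
    x ^ a = x ^ b ↔ ((a : ZMod (orderOf x)) = (b : ZMod (orderOf x))) := by
  set u : Kˣ := Units.mk0 x hx0 with hu
  have hux : (u : K) = x := rfl
  have h1 : x ^ a = x ^ b ↔ u ^ a = u ^ b := by
    constructor
    · intro h; ext; simpa [Units.val_pow_eq_pow_val, hux] using h
    · intro h
      have := congrArg (Units.val) h
      simpa [Units.val_pow_eq_pow_val, hux] using this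
  have h2 : orderOf x = orderOf u := by rw [← hux, orderOf_units]
  rw [h1, pow_eq_pow_iff_modEq, ZMod.natCast_eq_natCast_iff, h2]

open scoped Classical in
noncomputable def orb (q : ℕ) {K : Type*} [Field K] (x : K) : Finset K :=
  (Finset.range (orderOf ((q : ZMod (orderOf x)) ^ 2))).image fun i => x ^ (q ^ 2) ^ i

section Orb
variable {q : ℕ} {K : Type*} [Field K] {x : K}

theorem xpow_eq (hx0 : x ≠ 0) {a b : ℕ}
    (h : ((q : ZMod (orderOf x)) ^ 2) ^ a = ((q : ZMod (orderOf x)) ^ 2) ^ b) :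
    x ^ (q ^ 2) ^ a = x ^ (q ^ 2) ^ b := by
  rw [powiff hx0]
  push_cast
  exact h

theorem mem_orb_pow (hx0 : x ≠ 0) (hm : 0 < orderOf ((q : ZMod (orderOf x)) ^ 2)) (a : ℕ) :
    x ^ (q ^ 2) ^ a ∈ orb q x := by
  classical
  rw [orb, Finset.mem_image]
  exact ⟨a % _, Finset.mem_range.2 (Nat.mod_lt _ hm),
    xpow_eq hx0 (pow_mod_orderOf _ _)⟩

theorem x_mem_orb (hx0 : x ≠ 0) (hm : 0 < orderOf ((q : ZMod (orderOf x)) ^ 2)) :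
    x ∈ orb q x := by
  simpa using mem_orb_pow hx0 hm 0

theorem mem_orb_iff (hx0 : x ≠ 0) (hm : 0 < orderOf ((q : ZMod (orderOf x)) ^ 2)) {y : K} :
    y ∈ orb q x ↔ ∃ i : ℕ, y = x ^ (q ^ 2) ^ i := by
  classical
  constructor
  · intro hy
    rw [orb, Finset.mem_image] at hy
    obtain ⟨i, -, rfl⟩ := hy
    exact ⟨i, rfl⟩
  · rintro ⟨i, rfl⟩
    exact mem_orb_pow hx0 hm i

theorem orb_card (hx0 : x ≠ 0) :
    (orb q x).card = orderOf ((q : ZMod (orderOf x)) ^ 2) := by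
  classical
  rw [orb, Finset.card_image_of_injOn, Finset.card_range]
  intro i hi j hj hij
  simp only [Finset.coe_range, Set.mem_Iio] at hi hj
  have : ((q : ZMod (orderOf x)) ^ 2) ^ i = ((q : ZMod (orderOf x)) ^ 2) ^ j := by
    have := (powiff hx0 ((q ^ 2) ^ i) ((q ^ 2) ^ j)).1 hij
    push_cast at this
    exact this
  exact pow_injOn_Iio_orderOf hi hj this

theorem orb_stab (hx0 : x ≠ 0) (hm : 0 < orderOf ((q : ZMod (orderOf x)) ^ 2)) {y : K}
    (hy : y ∈ orb q x) (j : ℕ) : y ^ (q ^ 2) ^ j ∈ orb q x := by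
  obtain ⟨i, rfl⟩ := (mem_orb_iff hx0 hm).1 hy
  rw [← pow_mul, ← pow_add]
  exact mem_orb_pow hx0 hm (i + j)

theorem ne_zero_of_mem_orb (hx0 : x ≠ 0) (hm : 0 < orderOf ((q : ZMod (orderOf x)) ^ 2)) {y : K}
    (hy : y ∈ orb q x) : y ≠ 0 := by
  obtain ⟨i, rfl⟩ := (mem_orb_iff hx0 hm).1 hy
  exact pow_ne_zero _ hx0

theorem orderOf_mem_orb (hx0 : x ≠ 0) (hm : 0 < orderOf ((q : ZMod (orderOf x)) ^ 2))
    (hcop : Nat.Coprime q (orderOf x)) {y : K}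
    (hy : y ∈ orb q x) : orderOf y = orderOf x := by
  obtain ⟨i, rfl⟩ := (mem_orb_iff hx0 hm).1 hy
  exact Nat.Coprime.orderOf_pow ((hcop.symm.pow_right _).pow_right _ |>.symm |>.symm)

theorem orb_eq_of_mem (hx0 : x ≠ 0) (hm : 0 < orderOf ((q : ZMod (orderOf x)) ^ 2))
    (hcop : Nat.Coprime q (orderOf x)) {y : K}
    (hy : y ∈ orb q x) : orb q y = orb q x := by
  have hoy : orderOf y = orderOf x := orderOf_mem_orb hx0 hm hcop hy
  have hy0 : y ≠ 0 := ne_zero_of_mem_orb hx0 hm hy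
  have hmy : 0 < orderOf ((q : ZMod (orderOf y)) ^ 2) := by rw [hoy]; exact hm
  have hsub : orb q y ⊆ orb q x := by
    intro w hw
    obtain ⟨j, rfl⟩ := (mem_orb_iff hy0 hmy).1 hw
    exact orb_stab hx0 hm hy j
  refine (Finset.eq_of_subset_of_card_le hsub ?_)
  rw [orb_card hx0, orb_card hy0, hoy]

end Orb

theorem ordz_pos {q d : ℕ} (hd : 0 < d) (hcop : Nat.Coprime q d) :
    0 < orderOf ((q : ZMod d) ^ 2) ∧ orderOf ((q : ZMod d) ^ 2) ∣ d.totient := by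
  haveI : NeZero d := ⟨hd.ne'⟩
  set u : (ZMod d)ˣ := ZMod.unitOfCoprime q hcop with hu
  have h2 : ((u ^ 2 : (ZMod d)ˣ) : ZMod d) = (q : ZMod d) ^ 2 := by
    rw [Units.val_pow_eq_pow_val, ZMod.coe_unitOfCoprime]
  have he : orderOf ((q : ZMod d) ^ 2) = orderOf (u ^ 2) := by
    rw [← h2, orderOf_units]
  refine ⟨?_, ?_⟩
  · rw [he]; exact orderOf_pos _
  · rw [he, ← ZMod.card_units_eq_totient]
    exact orderOf_dvd_card

section D
variable {F K : Type*} [Field F] [Fintype F] [Field K] [Algebra F K]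

theorem fixK (q : ℕ) (hF : Fintype.card F = q ^ 2)
    (a : K) : a ^ q ^ 2 = a ↔ a ∈ Set.range (algebraMap F K) := by
  classical
  have hq2 : 1 < q ^ 2 := hF ▸ Fintype.one_lt_card
  constructor
  · intro ha
    set P : K[X] := X ^ (q ^ 2) - X with hP
    have hdeg : P.natDegree = q ^ 2 := by
      rw [hP, natDegree_sub_eq_left_of_natDegree_lt] <;>
        simp [natDegree_X_pow, hq2]
    have hPne : P ≠ 0 := by
      intro h0
      rw [h0, natDegree_zero] at hdeg; omega
    set T : Finset K := P.roots.toFinset with hT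
    set rangeF : Finset K := Finset.univ.image (algebraMap F K) with hR
    have hsub : rangeF ⊆ T := by
      intro y hy
      rw [hR, Finset.mem_image] at hy
      obtain ⟨b, -, rfl⟩ := hy
      rw [hT, Multiset.mem_toFinset, mem_roots hPne]
      have : b ^ q ^ 2 = b := by rw [← hF, FiniteField.pow_card]
      simp [hP, IsRoot, ← map_pow, this]
    have hcardR : rangeF.card = q ^ 2 := by
      rw [hR, Finset.card_image_of_injective _ (algebraMap F K).injective,
        Finset.card_univ, hF]
    have hcardT : T.card ≤ q ^ 2 := by
      calc T.card ≤ Multiset.card P.roots := P.roots.toFinset_card_le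
        _ ≤ P.natDegree := P.card_roots'
        _ = q ^ 2 := hdeg
    have heq : rangeF = T :=
      Finset.eq_of_subset_of_card_le hsub (by omega)
    have haT : a ∈ T := by
      rw [hT, Multiset.mem_toFinset, mem_roots hPne]
      simp [hP, IsRoot, ha]
    rw [← heq, hR, Finset.mem_image] at haT
    obtain ⟨b, -, hb⟩ := haT
    exact ⟨b, hb⟩
  · rintro ⟨b, rfl⟩
    rw [← map_pow, ← hF, FiniteField.pow_card]



theorem descent (q : ℕ) (hF : Fintype.card F = q ^ 2)
    {ψ : K →+* K} (hψ : ∀ a, ψ a = a ^ q) (S : Finset K) (hS : ∀ y ∈ S, y ^ q ^ 2 ∈ S) :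
    ∃ g : F[X], g.Monic ∧ g.map (algebraMap F K) = ∏ y ∈ S, (X - C y) := by
  classical
  set P : K[X] := ∏ y ∈ S, (X - C y) with hP
  have hmonic : P.Monic := monic_prod_of_monic _ _ fun y _ => monic_X_sub_C y
  set Φ : K →+* K := ψ.comp ψ with hΦdef
  have hΦ : ∀ a : K, Φ a = a ^ q ^ 2 := by
    intro a
    rw [hΦdef, RingHom.comp_apply, hψ, hψ, ← pow_mul, ← pow_two]
  have hinjpow : Function.Injective (fun y : K => y ^ q ^ 2) := by
    have := Φ.injective
    intro a b hab
    apply this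
    rw [hΦ, hΦ]; exact hab
  have himg : S.image (fun y => y ^ q ^ 2) = S := by
    apply Finset.eq_of_subset_of_card_le
    · intro y hy
      rw [Finset.mem_image] at hy
      obtain ⟨w, hw, rfl⟩ := hy
      exact hS w hw
    · rw [Finset.card_image_of_injective _ hinjpow]
  have hmapP : P.map Φ = P := by
    rw [hP, Polynomial.map_prod]
    simp only [Polynomial.map_sub, map_X, map_C]
    calc (∏ y ∈ S, (X - C (Φ y))) = ∏ y ∈ S, (X - C (y ^ q ^ 2)) := by
          apply Finset.prod_congr rfl; intro y _; rw [hΦ]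
      _ = ∏ y ∈ S.image (fun y => y ^ q ^ 2), (X - C y) := by
          rw [Finset.prod_image]
          intro a _ b _ hab; exact hinjpow hab
      _ = ∏ y ∈ S, (X - C y) := by rw [himg]
  have hcoeff : ∀ i : ℕ, P.coeff i ∈ Set.range (algebraMap F K) := by
    intro i
    rw [← fixK q hF, ← hΦ]
    have := congrArg (fun p => Polynomial.coeff p i) hmapP
    simpa [coeff_map] using this
  have hlift : P ∈ Polynomial.lifts (algebraMap F K) :=
    (Polynomial.lifts_iff_coeff_lifts P).2 hcoeff
  obtain ⟨g, hg1, _, hg3⟩ := Polynomial.lifts_and_degree_eq_and_monic hlift hmonic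
  exact ⟨g, hg3, hg1⟩

theorem root_stab (q : ℕ) (hF : Fintype.card F = q ^ 2)
    {ψ : K →+* K} (hψ : ∀ a, ψ a = a ^ q) {g : F[X]} {y : K}
    (hroot : (g.map (algebraMap F K)).eval y = 0) :
    (g.map (algebraMap F K)).eval (y ^ q ^ 2) = 0 := by
  set Φ : K →+* K := ψ.comp ψ with hΦdef
  have hΦ : ∀ a : K, Φ a = a ^ q ^ 2 := by
    intro a
    rw [hΦdef, RingHom.comp_apply, hψ, hψ, ← pow_mul, ← pow_two]
  have hfixmap : (g.map (algebraMap F K)).map Φ = g.map (algebraMap F K) := by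
    rw [Polynomial.map_map]
    congr 1
    ext b
    rw [RingHom.comp_apply, hΦ, fixK q hF]
    exact ⟨b, rfl⟩
  have : ((g.map (algebraMap F K)).map Φ).eval (Φ y) = Φ ((g.map (algebraMap F K)).eval y) := by
    rw [Polynomial.eval_map, Polynomial.eval₂_hom]
  rw [hfixmap, hroot, map_zero, hΦ] at this
  exact this

theorem root_stab_iter (q : ℕ) (hF : Fintype.card F = q ^ 2)
    {ψ : K →+* K} (hψ : ∀ a, ψ a = a ^ q) {g : F[X]} {y : K}
    (hroot : (g.map (algebraMap F K)).eval y = 0) (i : ℕ) :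
    (g.map (algebraMap F K)).eval (y ^ (q ^ 2) ^ i) = 0 := by
  induction i with
  | zero => simpa using hroot
  | succ i ih =>
      have := root_stab q hF hψ ih
      rwa [← pow_mul, ← pow_succ] at this

end D

section CR
variable {L : Type*} [Field L]

theorem reverse_prod (S : Finset L) (f : L → L[X]) :
    (∏ y ∈ S, f y).reverse = ∏ y ∈ S, (f y).reverse := by
  classical
  induction S using Finset.cons_induction with
  | empty => simp [Polynomial.reverse]
  | cons a s ha ih =>
      rw [Finset.prod_cons, Finset.prod_cons, reverse_mul_of_domain, ih]

theorem reverse_X_sub_C (y : L) : (X - C y).reverse = -(C y) * X + 1 := by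
  have hX : (X : L[X]).reverse = 1 := by
    have := reverse_X_mul (1 : L[X])
    rw [mul_one] at this
    rw [this, ← C_1, reverse_C]
  have h1 : (X : L[X]) - C y = C (-y) + X := by
    rw [map_neg]; ring
  rw [h1, reverse_C_add, hX, natDegree_X, pow_one, map_neg]

theorem crecip_prod {S : Finset L} (h0 : ∀ y ∈ S, y ≠ 0) :
    crecip (∏ y ∈ S, (X - C y)) = ∏ y ∈ S, (X - C y⁻¹) := by
  classical
  set P : L[X] := ∏ y ∈ S, (X - C y) with hP
  have coeff0 : P.coeff 0 = ∏ y ∈ S, (-y) := by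
    rw [hP, Polynomial.coeff_zero_eq_eval_zero, Polynomial.eval_prod]
    exact Finset.prod_congr rfl fun y _ => by simp
  have hc0 : (∏ y ∈ S, (-y)) ≠ 0 :=
    Finset.prod_ne_zero_iff.2 fun y hy => neg_ne_zero.2 (h0 y hy)
  have hfac : ∀ y ∈ S, (X - C y).reverse = -(C y) * (X - C y⁻¹) := by
    intro y hy
    rw [reverse_X_sub_C, mul_sub, neg_mul, neg_mul, ← map_mul,
      mul_inv_cancel₀ (h0 y hy), map_one]
    ring
  have hrev : P.reverse = C (∏ y ∈ S, (-y)) * ∏ y ∈ S, (X - C y⁻¹) := by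
    rw [hP, reverse_prod, Finset.prod_congr rfl hfac, Finset.prod_mul_distrib]
    congr 1
    rw [map_prod]
    exact Finset.prod_congr rfl fun y _ => by rw [map_neg]
  rw [crecip, coeff0, hrev, ← mul_assoc, ← map_mul, inv_mul_cancel₀ hc0, map_one, one_mul]

theorem cdagger_eq_map (q : ℕ) {ψ : L →+* L} (hψ : ∀ a, ψ a = a ^ q) (f : L[X]) :
    cdagger q f = (crecip f).map ψ := by
  rw [cdagger]
  rw [show (crecip f).map ψ = eval₂ (Polynomial.C.comp ψ) X (crecip f) from rfl,
    eval₂_eq_sum]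
  rw [Polynomial.sum, Polynomial.sum]
  exact Finset.sum_congr rfl fun i _ => by rw [RingHom.comp_apply, hψ]

end CR

section CR2
variable {F K : Type*} [Field F] [Field K] [Algebra F K]

theorem map_crecip (g : F[X]) :
    (crecip g).map (algebraMap F K) = crecip (g.map (algebraMap F K)) := by
  rw [crecip, crecip, Polynomial.map_mul, map_C, map_inv₀, coeff_map]
  congr 1
  rw [Polynomial.reverse, Polynomial.reverse, natDegree_map, ← reflect_map]

theorem map_cdagger (q : ℕ) {ψF : F →+* F} (hψF : ∀ a, ψF a = a ^ q)
    {ψK : K →+* K} (hψK : ∀ a, ψK a = a ^ q) (g : F[X]) :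
    (cdagger q g).map (algebraMap F K) = cdagger q (g.map (algebraMap F K)) := by
  rw [cdagger_eq_map q hψF, cdagger_eq_map q hψK, Polynomial.map_map, ← map_crecip,
    Polynomial.map_map]
  congr 1
  ext a
  simp [RingHom.comp_apply, hψF, hψK, map_pow]

end CR2

open scoped Classical in
noncomputable def opoly (q : ℕ) (F : Type*) {K : Type*} [Field F] [Field K] [Algebra F K]
    (x : K) : F[X] :=
  if h : ∃ g : F[X], g.Monic ∧ g.map (algebraMap F K) = ∏ y ∈ orb q x, (X - C y) then
    h.choose else 1

theorem finset_prod_dvd {K : Type*} [Field K] {S : Finset K} {P : K[X]} (hP : P ≠ 0)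
    (h : ∀ y ∈ S, P.eval y = 0) : (∏ y ∈ S, (X - C y)) ∣ P := by
  classical
  have hle : S.val ≤ P.roots := by
    rw [Multiset.le_iff_count]
    intro y
    by_cases hy : y ∈ S
    · have h1 : S.val.count y = 1 := Multiset.count_eq_one_of_mem S.nodup (by simpa using hy)
      rw [h1]
      rw [Multiset.one_le_count_iff_mem]
      rw [mem_roots hP]
      exact h y hy
    · rw [Multiset.count_eq_zero_of_notMem (by simpa using hy)]
      exact Nat.zero_le _
  have := (Multiset.prod_X_sub_C_dvd_iff_le_roots hP S.val).2 hle
  rwa [Finset.prod_eq_multiset_prod]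

section E
variable {F K : Type*} [Field F] [Fintype F] [Field K] [Algebra F K] [IsAlgClosed K]
variable {q n : ℕ} {ψ : K →+* K} {x : K}

theorem opoly_ex (hF : Fintype.card F = q ^ 2) (hψ : ∀ a, ψ a = a ^ q) (hx0 : x ≠ 0)
    (hm : 0 < orderOf ((q : ZMod (orderOf x)) ^ 2)) :
    ∃ g : F[X], g.Monic ∧ g.map (algebraMap F K) = ∏ y ∈ orb q x, (X - C y) := by
  apply descent q hF hψ
  intro y hy
  have := orb_stab hx0 hm hy 1
  simpa using this

theorem opoly_spec (hF : Fintype.card F = q ^ 2) (hψ : ∀ a, ψ a = a ^ q) (hx0 : x ≠ 0)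
    (hm : 0 < orderOf ((q : ZMod (orderOf x)) ^ 2)) :
    (opoly q F x).Monic ∧
      (opoly q F x).map (algebraMap F K) = ∏ y ∈ orb q x, (X - C y) := by
  have hex := opoly_ex hF hψ hx0 hm
  rw [opoly, dif_pos hex]
  exact hex.choose_spec

theorem opoly_roots (hF : Fintype.card F = q ^ 2) (hψ : ∀ a, ψ a = a ^ q) (hx0 : x ≠ 0)
    (hm : 0 < orderOf ((q : ZMod (orderOf x)) ^ 2)) :
    ((opoly q F x).map (algebraMap F K)).roots = (orb q x).val := by
  rw [(opoly_spec hF hψ hx0 hm).2]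
  exact roots_prod_X_sub_C _

theorem opoly_natDegree (hF : Fintype.card F = q ^ 2) (hψ : ∀ a, ψ a = a ^ q) (hx0 : x ≠ 0)
    (hm : 0 < orderOf ((q : ZMod (orderOf x)) ^ 2)) :
    (opoly q F x).natDegree = orderOf ((q : ZMod (orderOf x)) ^ 2) := by
  have h1 := congrArg Polynomial.natDegree (opoly_spec hF hψ hx0 hm).2
  rw [natDegree_map] at h1
  rw [h1, natDegree_prod _ _ (fun y _ => X_sub_C_ne_zero y)]
  simp [natDegree_X_sub_C, ← orb_card (q := q) hx0]

theorem opoly_not_unit (hF : Fintype.card F = q ^ 2) (hψ : ∀ a, ψ a = a ^ q) (hx0 : x ≠ 0)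
    (hm : 0 < orderOf ((q : ZMod (orderOf x)) ^ 2)) :
    ¬IsUnit (opoly q F x) := by
  apply not_isUnit_of_natDegree_pos
  rw [opoly_natDegree hF hψ hx0 hm]
  exact hm

theorem opoly_dvd_of_roots (hF : Fintype.card F = q ^ 2) (hψ : ∀ a, ψ a = a ^ q) (hx0 : x ≠ 0)
    (hm : 0 < orderOf ((q : ZMod (orderOf x)) ^ 2)) {f : F[X]} (hf0 : f ≠ 0)
    (hroots : ∀ y ∈ orb q x, (f.map (algebraMap F K)).eval y = 0) :
    opoly q F x ∣ f := by
  rw [← map_dvd_map' (algebraMap F K), (opoly_spec hF hψ hx0 hm).2]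
  exact finset_prod_dvd (by simpa using hf0) hroots

theorem opoly_dvd_Xn (hF : Fintype.card F = q ^ 2) (hψ : ∀ a, ψ a = a ^ q) (hx0 : x ≠ 0)
    (hm : 0 < orderOf ((q : ZMod (orderOf x)) ^ 2))
    (hcop : Nat.Coprime q (orderOf x)) (hn0 : 0 < n) (hxn : x ^ n = 1) :
    opoly q F x ∣ (X ^ n - 1 : F[X]) := by
  have hne : (X ^ n - 1 : F[X]) ≠ 0 := by
    have := X_pow_sub_C_ne_zero hn0 (1 : F)
    simpa using this
  apply opoly_dvd_of_roots hF hψ hx0 hm hne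
  intro y hy
  have hdy : orderOf y = orderOf x := orderOf_mem_orb hx0 hm hcop hy
  have : y ^ n = 1 := by
    apply orderOf_dvd_iff_pow_eq_one.1
    rw [hdy]
    exact orderOf_dvd_of_pow_eq_one hxn
  simp [Polynomial.map_sub, Polynomial.map_pow, this]

theorem opoly_irred (hF : Fintype.card F = q ^ 2) (hψ : ∀ a, ψ a = a ^ q) (hx0 : x ≠ 0)
    (hm : 0 < orderOf ((q : ZMod (orderOf x)) ^ 2))
    (hcop : Nat.Coprime q (orderOf x)) :
    Irreducible (opoly q F x) := by
  obtain ⟨h, hmono, hirr, hdvd⟩ :=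
    (opoly q F x).exists_monic_irreducible_factor (opoly_not_unit hF hψ hx0 hm)
  suffices hs : opoly q F x = h by rw [hs]; exact hirr
  have hdeg : (h.map (algebraMap F K)).degree ≠ 0 := by
    rw [degree_map]
    intro h0
    have := hirr.natDegree_pos
    have h2 : h.natDegree = 0 := natDegree_eq_zero_iff_degree_le_zero.2 h0.le
    omega
  obtain ⟨y₀, hy₀⟩ := IsAlgClosed.exists_root _ hdeg
  have hmapdvd : h.map (algebraMap F K) ∣ (opoly q F x).map (algebraMap F K) :=
    Polynomial.map_dvd _ hdvd
  have hy₀op : ((opoly q F x).map (algebraMap F K)).eval y₀ = 0 := by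
    obtain ⟨t, ht⟩ := hmapdvd
    rw [ht, eval_mul, hy₀, zero_mul]
  have hy₀orb : y₀ ∈ orb q x := by
    have hne : (opoly q F x).map (algebraMap F K) ≠ 0 :=
      ((opoly_spec hF hψ hx0 hm).1.map _).ne_zero
    have hmem : y₀ ∈ ((opoly q F x).map (algebraMap F K)).roots := by
      rw [mem_roots hne]; exact hy₀op
    rw [opoly_roots hF hψ hx0 hm] at hmem
    exact hmem
  have hy₀0 : y₀ ≠ 0 := ne_zero_of_mem_orb hx0 hm hy₀orb
  have hdy : orderOf y₀ = orderOf x := orderOf_mem_orb hx0 hm hcop hy₀orb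
  have hmy : 0 < orderOf ((q : ZMod (orderOf y₀)) ^ 2) := by rw [hdy]; exact hm
  have horb : orb q y₀ = orb q x := orb_eq_of_mem hx0 hm hcop hy₀orb
  have hall : ∀ w ∈ orb q x, (h.map (algebraMap F K)).eval w = 0 := by
    intro w hw
    rw [← horb] at hw
    obtain ⟨i, rfl⟩ := (mem_orb_iff hy₀0 hmy).1 hw
    exact root_stab_iter q hF hψ hy₀ i
  have h1 : opoly q F x ∣ h := opoly_dvd_of_roots hF hψ hx0 hm hmono.ne_zero hall
  exact Polynomial.eq_of_monic_of_associated (opoly_spec hF hψ hx0 hm).1 hmono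
    (associated_of_dvd_dvd h1 hdvd)

end E

section G
variable {F K : Type*} [Field F] [Fintype F] [Field K] [Algebra F K] [IsAlgClosed K]
variable {q n : ℕ} {ψ : K →+* K} {ψF : F →+* F} {x : K}

theorem scrim_iff (hF : Fintype.card F = q ^ 2) (hψF : ∀ a, ψF a = a ^ q)
    (hψ : ∀ a, ψ a = a ^ q) (hx0 : x ≠ 0)
    (hm : 0 < orderOf ((q : ZMod (orderOf x)) ^ 2)) :
    opoly q F x = cdagger q (opoly q F x) ↔ (x ^ q)⁻¹ ∈ orb q x := by
  classical
  have hspec := opoly_spec hF hψ hx0 hm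
  set T : Finset K := (orb q x).image (fun y => (y ^ q)⁻¹) with hT
  have hinj : Function.Injective (fun y : K => (y ^ q)⁻¹) := by
    intro a b hab
    have h1 : a ^ q = b ^ q := by
      have := congrArg (fun z : K => z⁻¹) hab
      simpa using this
    exact ψ.injective (by rw [hψ, hψ]; exact h1)
  have hmapcd : (cdagger q (opoly q F x)).map (algebraMap F K) = ∏ w ∈ T, (X - C w) := by
    rw [map_cdagger q hψF hψ, hspec.2, cdagger_eq_map q hψ,
      crecip_prod (fun y hy => ne_zero_of_mem_orb hx0 hm hy), Polynomial.map_prod]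
    simp only [Polynomial.map_sub, map_X, map_C]
    rw [hT, Finset.prod_image (fun a _ b _ hab => hinj hab)]
    apply Finset.prod_congr rfl
    intro y hy
    rw [hψ, inv_pow]
  constructor
  · intro hEq
    have hpr : (∏ y ∈ orb q x, (X - C y)) = ∏ w ∈ T, (X - C w) := by
      rw [← hspec.2, ← hmapcd, ← hEq]
    have hval := congrArg Polynomial.roots hpr
    rw [roots_prod_X_sub_C, roots_prod_X_sub_C] at hval
    have hTeq : orb q x = T := Finset.val_inj.1 hval
    have hxmem : x ∈ orb q x := x_mem_orb hx0 hm
    have : (x ^ q)⁻¹ ∈ T := Finset.mem_image_of_mem _ hxmem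
    rwa [← hTeq] at this
  · intro hgood
    have hTsub : T ⊆ orb q x := by
      intro w hw
      rw [hT, Finset.mem_image] at hw
      obtain ⟨y, hy, rfl⟩ := hw
      obtain ⟨i, rfl⟩ := (mem_orb_iff hx0 hm).1 hy
      have hid : ((x ^ (q ^ 2) ^ i) ^ q)⁻¹ = ((x ^ q)⁻¹) ^ (q ^ 2) ^ i := by
        rw [← pow_mul, inv_pow, ← pow_mul, mul_comm, pow_mul]
      rw [hid]
      exact orb_stab hx0 hm hgood i
    have hTeq : T = orb q x :=
      Finset.eq_of_subset_of_card_le hTsub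
        (by rw [hT, Finset.card_image_of_injective _ hinj])
    apply Polynomial.map_injective (algebraMap F K) (algebraMap F K).injective
    rw [hmapcd, hspec.2, hTeq]

theorem good_iff (hx0 : x ≠ 0) (hm : 0 < orderOf ((q : ZMod (orderOf x)) ^ 2))
    (hcop : Nat.Coprime q (orderOf x)) :
    ((x ^ q)⁻¹ ∈ orb q x) ↔ ∃ e : ℕ, Odd e ∧ orderOf x ∣ q ^ e + 1 := by
  constructor
  · intro hg
    obtain ⟨i, hi⟩ := (mem_orb_iff hx0 hm).1 hg
    have hx1 : x ^ ((q ^ 2) ^ i + q) = 1 := by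
      rw [pow_add, ← hi]
      exact inv_mul_cancel₀ (pow_ne_zero _ hx0)
    have hdvd : orderOf x ∣ (q ^ 2) ^ i + q := orderOf_dvd_of_pow_eq_one hx1
    cases i with
    | zero =>
        refine ⟨1, odd_one, ?_⟩
        have he : (q ^ 2) ^ 0 + q = q ^ 1 + 1 := by ring
        rwa [he] at hdvd
    | succ j =>
        refine ⟨2 * j + 1, ⟨j, by ring⟩, ?_⟩
        have hfact : (q ^ 2) ^ (j + 1) + q = q * (q ^ (2 * j + 1) + 1) := by ring
        rw [hfact] at hdvd
        exact (Nat.Coprime.dvd_of_dvd_mul_left hcop.symm hdvd)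
  · rintro ⟨e, ⟨j, rfl⟩, hdvd⟩
    have hx1 : x ^ ((q ^ 2) ^ (j + 1) + q) = 1 := by
      apply orderOf_dvd_iff_pow_eq_one.1
      have he : (q ^ 2) ^ (j + 1) + q = q * (q ^ (2 * j + 1) + 1) := by ring
      rw [he]
      exact Dvd.dvd.mul_left hdvd q
    have hinv : x ^ (q ^ 2) ^ (j + 1) = (x ^ q)⁻¹ := by
      apply eq_inv_of_mul_eq_one_left
      rw [← pow_add]
      exact hx1
    rw [← hinv]
    exact mem_orb_pow hx0 hm _

end G

theorem opoly_congr {F K : Type*} [Field F] [Field K] [Algebra F K] (q : ℕ) {x y : K}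
    (h : orb q x = orb q y) : opoly q F x = opoly q F y := by
  unfold opoly
  rw [h]

open scoped Classical in
theorem master {q n : ℕ} {F K : Type*} [Field F] [Fintype F] [Field K] [Algebra F K]
    [IsAlgClosed K] (hF : Fintype.card F = q ^ 2) {ψ : K →+* K} (hψ : ∀ a, ψ a = a ^ q)
    {ψF : F →+* F} (hψF : ∀ a, ψF a = a ^ q) (hnK : (n : K) ≠ 0)
    (hn : 0 < n) (hgcd : Nat.Coprime n q) :
    {f : F[X] | (f.Monic ∧ Irreducible f ∧ f = cdagger q f) ∧ f ∣ X ^ n - 1}.ncard =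
      ∑ d ∈ n.divisors,
        if ∃ e : ℕ, Odd e ∧ d ∣ q ^ e + 1 then
          Nat.totient d / orderOf ((q : ZMod d) ^ 2)
        else 0 := by
  classical
  set lam : ℕ → Prop := fun d => ∃ e : ℕ, Odd e ∧ d ∣ q ^ e + 1 with hlam
  set B : ℕ → Finset F[X] :=
    fun d => if lam d then (primitiveRoots d K).image (opoly q F) else ∅ with hB
  -- basic facts about divisors
  have hdiv : ∀ d ∈ n.divisors, 0 < d ∧ d ∣ n ∧ Nat.Coprime q d := by
    intro d hd
    have h1 := Nat.pos_of_mem_divisors hd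
    have h2 := (Nat.mem_divisors.1 hd).1
    exact ⟨h1, h2, Nat.Coprime.coprime_dvd_right h2 hgcd.symm⟩
  have hxmem : ∀ d ∈ n.divisors, ∀ x ∈ primitiveRoots d K,
      orderOf x = d ∧ x ≠ 0 ∧ x ^ n = 1 := by
    intro d hd x hx
    obtain ⟨hd0, hdn, -⟩ := hdiv d hd
    have hprim : IsPrimitiveRoot x d := (mem_primitiveRoots hd0).1 hx
    have hord : orderOf x = d := hprim.eq_orderOf.symm
    have hx0 : x ≠ 0 := by
      intro h0
      have h1 := hprim.pow_eq_one
      rw [h0, zero_pow hd0.ne'] at h1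
      exact zero_ne_one h1
    have hxn : x ^ n = 1 := by
      apply orderOf_dvd_iff_pow_eq_one.1
      rw [hord]; exact hdn
    exact ⟨hord, hx0, hxn⟩
  -- forward: each opoly with lam is in the scrim set
  have hforward : ∀ d ∈ n.divisors, ∀ x ∈ primitiveRoots d K, lam d →
      ((opoly q F x).Monic ∧ Irreducible (opoly q F x) ∧
        opoly q F x = cdagger q (opoly q F x)) ∧ opoly q F x ∣ X ^ n - 1 := by
    intro d hd x hx hl
    obtain ⟨hd0, hdn, hcd⟩ := hdiv d hd
    obtain ⟨hord, hx0, hxn⟩ := hxmem d hd x hx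
    have hcop : Nat.Coprime q (orderOf x) := by rw [hord]; exact hcd
    have hm : 0 < orderOf ((q : ZMod (orderOf x)) ^ 2) := by
      rw [hord]; exact (ordz_pos hd0 hcd).1
    have hgood : (x ^ q)⁻¹ ∈ orb q x := by
      apply (good_iff hx0 hm hcop).2
      rw [hord]; exact hl
    exact ⟨⟨(opoly_spec hF hψ hx0 hm).1, opoly_irred hF hψ hx0 hm hcop,
      (scrim_iff hF hψF hψ hx0 hm).2 hgood⟩,
      opoly_dvd_Xn hF hψ hx0 hm hcop hn hxn⟩
  -- backward: every scrim factor is such an opoly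
  have hbackward : ∀ f : F[X], f.Monic → Irreducible f → f = cdagger q f →
      f ∣ X ^ n - 1 → ∃ d ∈ n.divisors, lam d ∧ ∃ x ∈ primitiveRoots d K,
        f = opoly q F x := by
    intro f hmon hirr hself hdvdf
    have hf0 : f ≠ 0 := hmon.ne_zero
    have hdegf : (f.map (algebraMap F K)).degree ≠ 0 := by
      rw [degree_map]
      intro h0
      have h1 := hirr.natDegree_pos
      have h2 : f.natDegree = 0 := natDegree_eq_zero_iff_degree_le_zero.2 h0.le
      omega
    obtain ⟨x, hxroot⟩ := IsAlgClosed.exists_root _ hdegf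
    have hmapdvd : f.map (algebraMap F K) ∣ (X ^ n - 1 : K[X]) := by
      have h1 := Polynomial.map_dvd (algebraMap F K) hdvdf
      rwa [Polynomial.map_sub, Polynomial.map_pow, map_X, Polynomial.map_one] at h1
    have hxn : x ^ n = 1 := by
      obtain ⟨t, ht⟩ := hmapdvd
      have h1 := congrArg (Polynomial.eval x) ht
      rw [eval_mul, hxroot, zero_mul, eval_sub, eval_pow, eval_X, eval_one] at h1
      exact sub_eq_zero.1 h1
    have hx0 : x ≠ 0 := by
      intro h0
      rw [h0, zero_pow hn.ne'] at hxn
      exact zero_ne_one hxn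
    have hfin : IsOfFinOrder x := isOfFinOrder_iff_pow_eq_one.2 ⟨n, hn, hxn⟩
    have hd0 : 0 < orderOf x := hfin.orderOf_pos
    have hdn : orderOf x ∣ n := orderOf_dvd_of_pow_eq_one hxn
    have hdmem : orderOf x ∈ n.divisors := Nat.mem_divisors.2 ⟨hdn, hn.ne'⟩
    have hcop : Nat.Coprime q (orderOf x) := Nat.Coprime.coprime_dvd_right hdn hgcd.symm
    have hm : 0 < orderOf ((q : ZMod (orderOf x)) ^ 2) := (ordz_pos hd0 hcop).1
    have hall : ∀ w ∈ orb q x, (f.map (algebraMap F K)).eval w = 0 := by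
      intro w hw
      obtain ⟨i, rfl⟩ := (mem_orb_iff hx0 hm).1 hw
      exact root_stab_iter q hF hψ hxroot i
    have hdvd2 : opoly q F x ∣ f := opoly_dvd_of_roots hF hψ hx0 hm hf0 hall
    have heq : opoly q F x = f :=
      eq_of_monic_of_associated (opoly_spec hF hψ hx0 hm).1 hmon
        ((opoly_irred hF hψ hx0 hm hcop).associated_of_dvd hirr hdvd2)
    have hgood : (x ^ q)⁻¹ ∈ orb q x :=
      (scrim_iff hF hψF hψ hx0 hm).1 (by rw [heq]; exact hself)
    refine ⟨orderOf x, hdmem, (good_iff hx0 hm hcop).1 hgood, x, ?_, heq.symm⟩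
    exact (mem_primitiveRoots hd0).2 (IsPrimitiveRoot.orderOf x)
  -- orbit determined by opoly
  have horb_of_opoly : ∀ (x y : K), x ≠ 0 → y ≠ 0 →
      0 < orderOf ((q : ZMod (orderOf x)) ^ 2) →
      0 < orderOf ((q : ZMod (orderOf y)) ^ 2) →
      opoly q F x = opoly q F y → orb q x = orb q y := by
    intro x y hx0 hy0 hmx hmy hxy
    have h1 := congrArg (fun g : F[X] => (g.map (algebraMap F K)).roots) hxy
    rw [opoly_roots hF hψ hx0 hmx, opoly_roots hF hψ hy0 hmy] at h1
    exact Finset.val_inj.1 h1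
  -- the set equality
  have hset : {f : F[X] | (f.Monic ∧ Irreducible f ∧ f = cdagger q f) ∧ f ∣ X ^ n - 1} =
      ↑(n.divisors.biUnion B) := by
    ext f
    simp only [Set.mem_setOf_eq, Finset.coe_biUnion, Set.mem_iUnion, Finset.mem_coe]
    constructor
    · rintro ⟨⟨hmon, hirr, hself⟩, hdvdf⟩
      obtain ⟨d, hd, hl, x, hx, rfl⟩ := hbackward f hmon hirr hself hdvdf
      refine ⟨d, hd, ?_⟩
      rw [hB]
      simp only [if_pos hl]
      exact Finset.mem_image_of_mem _ hx
    · rintro ⟨d, hd, hfB⟩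
      rw [hB] at hfB
      simp only at hfB
      by_cases hl : lam d
      · rw [if_pos hl] at hfB
        obtain ⟨x, hx, rfl⟩ := Finset.mem_image.1 hfB
        exact hforward d hd x hx hl
      · rw [if_neg hl] at hfB
        exact absurd hfB (Finset.notMem_empty f)
  rw [hset, Set.ncard_coe_finset]
  -- disjointness
  have hdisj : ∀ d1 ∈ n.divisors, ∀ d2 ∈ n.divisors, d1 ≠ d2 →
      Disjoint (B d1) (B d2) := by
    intro d1 hd1 d2 hd2 hne
    rw [Finset.disjoint_left]
    intro g hg1 hg2
    rw [hB] at hg1 hg2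
    simp only at hg1 hg2
    by_cases hl1 : lam d1
    · by_cases hl2 : lam d2
      · rw [if_pos hl1] at hg1
        rw [if_pos hl2] at hg2
        obtain ⟨x1, hx1, hgx1⟩ := Finset.mem_image.1 hg1
        obtain ⟨x2, hx2, hgx2⟩ := Finset.mem_image.1 hg2
        obtain ⟨hord1, hx10, -⟩ := hxmem d1 hd1 x1 hx1
        obtain ⟨hord2, hx20, -⟩ := hxmem d2 hd2 x2 hx2
        have hm1 : 0 < orderOf ((q : ZMod (orderOf x1)) ^ 2) := by
          rw [hord1]; exact (ordz_pos (hdiv d1 hd1).1 (hdiv d1 hd1).2.2).1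
        have hm2 : 0 < orderOf ((q : ZMod (orderOf x2)) ^ 2) := by
          rw [hord2]; exact (ordz_pos (hdiv d2 hd2).1 (hdiv d2 hd2).2.2).1
        have horb : orb q x1 = orb q x2 :=
          horb_of_opoly x1 x2 hx10 hx20 hm1 hm2 (by rw [hgx1, hgx2])
        have hx2mem : x2 ∈ orb q x1 := by
          rw [horb]; exact x_mem_orb hx20 hm2
        have : orderOf x2 = orderOf x1 :=
          orderOf_mem_orb hx10 hm1 (by rw [hord1]; exact (hdiv d1 hd1).2.2) hx2mem
        rw [hord1, hord2] at this
        exact hne this.symm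
      · rw [if_neg hl2] at hg2
        exact absurd hg2 (Finset.notMem_empty g)
    · rw [if_neg hl1] at hg1
      exact absurd hg1 (Finset.notMem_empty g)
  rw [Finset.card_biUnion hdisj]
  apply Finset.sum_congr rfl
  intro d hd
  obtain ⟨hd0, hdn, hcd⟩ := hdiv d hd
  by_cases hl : lam d
  · rw [hB]
    simp only [if_pos hl, if_pos (show ∃ e : ℕ, Odd e ∧ d ∣ q ^ e + 1 from hl)]
    -- count the image
    have hdK : ((d : K)) ≠ 0 := by
      intro h0
      obtain ⟨c, rfl⟩ := hdn
      apply hnK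
      push_cast
      rw [h0, zero_mul]
    haveI : NeZero ((d : K)) := ⟨hdK⟩
    obtain ⟨ζ, hζ⟩ := HasEnoughRootsOfUnity.exists_primitiveRoot K d
    have hcardP : (primitiveRoots d K).card = Nat.totient d := hζ.card_primitiveRoots
    have hkey := Finset.card_eq_sum_card_image (opoly q F (K := K)) (primitiveRoots d K)
    have hfib : ∀ b ∈ (primitiveRoots d K).image (opoly q F),
        ((primitiveRoots d K).filter (fun a => opoly q F a = b)).card =
          orderOf ((q : ZMod d) ^ 2) := by
      intro b hb
      obtain ⟨x, hx, rfl⟩ := Finset.mem_image.1 hb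
      obtain ⟨hord, hx0, -⟩ := hxmem d hd x hx
      have hm : 0 < orderOf ((q : ZMod (orderOf x)) ^ 2) := by
        rw [hord]; exact (ordz_pos hd0 hcd).1
      have hcop : Nat.Coprime q (orderOf x) := by rw [hord]; exact hcd
      have hfilter : (primitiveRoots d K).filter (fun a => opoly q F a = opoly q F x) =
          orb q x := by
        ext y
        rw [Finset.mem_filter]
        constructor
        · rintro ⟨hyP, hyeq⟩
          obtain ⟨hordy, hy0, -⟩ := hxmem d hd y hyP
          have hmy : 0 < orderOf ((q : ZMod (orderOf y)) ^ 2) := by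
            rw [hordy]; exact (ordz_pos hd0 hcd).1
          have : orb q y = orb q x := horb_of_opoly y x hy0 hx0 hmy hm hyeq
          rw [← this]
          exact x_mem_orb hy0 hmy
        · intro hy
          have hordy : orderOf y = orderOf x := orderOf_mem_orb hx0 hm hcop hy
          have hy0 : y ≠ 0 := ne_zero_of_mem_orb hx0 hm hy
          constructor
          · apply (mem_primitiveRoots hd0).2
            have := IsPrimitiveRoot.orderOf y
            rwa [hordy, hord] at this
          · exact opoly_congr q (orb_eq_of_mem hx0 hm hcop hy)
      rw [hfilter, orb_card hx0, hord]
    rw [Finset.sum_congr rfl hfib, Finset.sum_const, smul_eq_mul, hcardP] at hkey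
    exact (Nat.div_eq_of_eq_mul_left (ordz_pos hd0 hcd).1
      (by rw [hkey, mul_comm])).symm
  · rw [hB]
    simp only [if_neg hl, if_neg (show ¬∃ e : ℕ, Odd e ∧ d ∣ q ^ e + 1 from hl)]
    exact Finset.card_empty

open scoped Classical in
theorem stmt1 {q n : ℕ} (hq : IsPrimePow q)
    {F : Type*} [Field F] [Fintype F] (hF : Fintype.card F = q ^ 2)
    (hn : 0 < n) (hgcd : Nat.Coprime n q) :
    (scrimFactors F q n).ncard =
      ∑ d ∈ n.divisors,
        if ∃ e : ℕ, Odd e ∧ d ∣ q ^ e + 1 then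
          Nat.totient d / orderOf ((q : ZMod d) ^ 2)
        else 0 := by
  simp only [scrimFactors, IsSCRIM]
  classical
  obtain ⟨p, k, hp, hk, hpk⟩ := hq
  have hpp : p.Prime := Nat.prime_iff.2 hp
  -- the characteristic of F is p
  have hrchar : ringChar F = p := by
    haveI := ringChar.charP F
    obtain ⟨m, hprime, hcard⟩ := FiniteField.card F (ringChar F)
    have h2 : ringChar F ^ (m : ℕ) = p ^ (2 * k) := by
      rw [← hcard, hF, ← hpk, ← pow_mul, mul_comm k 2]
    have h1 : ringChar F ∣ p ^ (2 * k) := by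
      rw [← h2]
      exact dvd_pow_self _ m.pos.ne'
    exact (Nat.prime_dvd_prime_iff_eq hprime hpp).1 (hprime.dvd_of_dvd_pow h1)
  haveI hcharF : CharP F p := hrchar ▸ ringChar.charP F
  haveI : Fact p.Prime := ⟨hpp⟩
  set K := AlgebraicClosure F
  haveI hcharK : CharP K p :=
    charP_of_injective_algebraMap (algebraMap F K).injective p
  set ψF : F →+* F := iterateFrobenius F p k with hψFdef
  have hψF : ∀ a : F, ψF a = a ^ q := by
    intro a
    rw [hψFdef, iterateFrobenius_def, hpk]
  set ψ : K →+* K := iterateFrobenius K p k with hψdef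
  have hψ : ∀ a : K, ψ a = a ^ q := by
    intro a
    rw [hψdef, iterateFrobenius_def, hpk]
  have hnK : ((n : K)) ≠ 0 := by
    intro h0
    rw [CharP.cast_eq_zero_iff K p] at h0
    have hpq : p ∣ q := hpk ▸ dvd_pow_self p hk.ne'
    have : p ∣ 1 := by
      have := Nat.dvd_gcd h0 hpq
      rwa [hgcd] at this
    exact Nat.Prime.one_lt hpp |>.ne' (Nat.dvd_one.1 this)
  exact master hF hψ hψF hnK hn hgcd
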